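/- The function θ₀(R) = (−1 + 8R⁴·log R + R⁸)/(16·R^{3/2}·(1+R⁴)) satisfies −θ₀''(R) + (15/(4R²))·θ₀(R) − (32R²/(1+R⁴)²)·θ₀(R) = 0 for all R > 0. -/

import Mathlib

noncomputable def theta0 (R : ℝ) : ℝ :=
  (-1 + 8 * R ^ 4 * Real.log R + R ^ 8) / (16 * R ^ ((3 : ℝ) / 2) * (1 + R ^ 4))

noncomputable def psiA (s : ℝ) : ℝ := -1 + 16 * (s ^ 8 * Real.log s) + s ^ 16
noncomputable def psiA' (s : ℝ) : ℝ := 128 * (s ^ 7 * Real.log s) + 16 * s ^ 7 + 16 * s ^ 15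
noncomputable def psiA'' (s : ℝ) : ℝ := 896 * (s ^ 6 * Real.log s) + 240 * s ^ 6 + 240 * s ^ 14
noncomputable def psiB (s : ℝ) : ℝ := 16 * (s ^ 3 * (1 + s ^ 8))
noncomputable def psiB' (s : ℝ) : ℝ := 48 * s ^ 2 + 176 * s ^ 10
noncomputable def psiB'' (s : ℝ) : ℝ := 96 * s + 1760 * s ^ 9

noncomputable def psi (s : ℝ) : ℝ := psiA s / psiB s
noncomputable def psi1 (s : ℝ) : ℝ := (psiA' s * psiB s - psiA s * psiB' s) / (psiB s) ^ 2
noncomputable def psi2 (s : ℝ) : ℝ :=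
  ((psiA'' s * psiB s - psiA s * psiB'' s) * (psiB s) ^ 2
    - (psiA' s * psiB s - psiA s * psiB' s) * (2 * psiB s * psiB' s)) / ((psiB s) ^ 2) ^ 2

noncomputable def chi (s : ℝ) : ℝ := psi1 s * (1 / (2 * s))
noncomputable def chi' (s : ℝ) : ℝ := psi2 s * (1 / (2 * s)) - psi1 s * (1 / (2 * s ^ 2))

lemma psiB_ne {s : ℝ} (hs : 0 < s) : psiB s ≠ 0 := by
  unfold psiB
  positivity

lemma hasDerivAt_psiA {s : ℝ} (hs : 0 < s) : HasDerivAt psiA (psiA' s) s := by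
  have h1 : HasDerivAt (fun x : ℝ => x ^ 8 * Real.log x)
      ((8 : ℕ) * s ^ 7 * Real.log s + s ^ 8 * s⁻¹) s :=
    (hasDerivAt_pow 8 s).mul (Real.hasDerivAt_log hs.ne')
  have h : HasDerivAt (fun x : ℝ => -1 + 16 * (x ^ 8 * Real.log x) + x ^ 16)
      (0 + 16 * ((8 : ℕ) * s ^ 7 * Real.log s + s ^ 8 * s⁻¹) + (16 : ℕ) * s ^ 15) s :=
    ((hasDerivAt_const s (-1)).add (h1.const_mul 16)).add (hasDerivAt_pow 16 s)
  refine h.congr_deriv (Eq.symm ?_)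
  unfold psiA'
  field_simp
  ring

lemma hasDerivAt_psiA' {s : ℝ} (hs : 0 < s) : HasDerivAt psiA' (psiA'' s) s := by
  have h1 : HasDerivAt (fun x : ℝ => x ^ 7 * Real.log x)
      ((7 : ℕ) * s ^ 6 * Real.log s + s ^ 7 * s⁻¹) s :=
    (hasDerivAt_pow 7 s).mul (Real.hasDerivAt_log hs.ne')
  have h : HasDerivAt (fun x : ℝ => 128 * (x ^ 7 * Real.log x) + 16 * x ^ 7 + 16 * x ^ 15)
      (128 * ((7 : ℕ) * s ^ 6 * Real.log s + s ^ 7 * s⁻¹) + 16 * ((7 : ℕ) * s ^ 6)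
        + 16 * ((15 : ℕ) * s ^ 14)) s :=
    ((h1.const_mul 128).add ((hasDerivAt_pow 7 s).const_mul 16)).add
      ((hasDerivAt_pow 15 s).const_mul 16)
  refine h.congr_deriv (Eq.symm ?_)
  unfold psiA''
  field_simp
  ring

lemma hasDerivAt_psiB {s : ℝ} : HasDerivAt psiB (psiB' s) s := by
  have h : HasDerivAt (fun x : ℝ => 16 * (x ^ 3 * (1 + x ^ 8)))
      (16 * ((3 : ℕ) * s ^ 2 * (1 + s ^ 8) + s ^ 3 * (0 + (8 : ℕ) * s ^ 7))) s :=
    (((hasDerivAt_pow 3 s).mul ((hasDerivAt_const s 1).add (hasDerivAt_pow 8 s))).const_mul 16)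
  refine h.congr_deriv (Eq.symm ?_)
  unfold psiB'
  push_cast
  ring

lemma hasDerivAt_psiB' {s : ℝ} : HasDerivAt psiB' (psiB'' s) s := by
  have h : HasDerivAt (fun x : ℝ => 48 * x ^ 2 + 176 * x ^ 10)
      (48 * ((2 : ℕ) * s ^ 1) + 176 * ((10 : ℕ) * s ^ 9)) s :=
    ((hasDerivAt_pow 2 s).const_mul 48).add ((hasDerivAt_pow 10 s).const_mul 176)
  refine h.congr_deriv (Eq.symm ?_)
  unfold psiB''
  push_cast
  ring

lemma hasDerivAt_psi {s : ℝ} (hs : 0 < s) : HasDerivAt psi (psi1 s) s :=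
  (hasDerivAt_psiA hs).div hasDerivAt_psiB (psiB_ne hs)

lemma hasDerivAt_psi1 {s : ℝ} (hs : 0 < s) : HasDerivAt psi1 (psi2 s) s := by
  have hnum : HasDerivAt (fun x => psiA' x * psiB x - psiA x * psiB' x)
      (psiA'' s * psiB s + psiA' s * psiB' s - (psiA' s * psiB' s + psiA s * psiB'' s)) s :=
    (((hasDerivAt_psiA' hs).mul hasDerivAt_psiB)).sub
      ((hasDerivAt_psiA hs).mul hasDerivAt_psiB')
  have hden : HasDerivAt (fun x => (psiB x) ^ 2) ((2 : ℕ) * psiB s ^ 1 * psiB' s) s :=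
    hasDerivAt_psiB.pow 2
  have h := hnum.div hden (pow_ne_zero 2 (psiB_ne hs))
  refine h.congr_deriv (Eq.symm ?_)
  unfold psi2
  push_cast
  ring

lemma hasDerivAt_chi {s : ℝ} (hs : 0 < s) : HasDerivAt chi (chi' s) s := by
  have hinv : HasDerivAt (fun x : ℝ => 1 / (2 * x))
      ((0 * (2 * s) - 1 * 2) / (2 * s) ^ 2) s :=
    (hasDerivAt_const s 1).div (by simpa using (hasDerivAt_id s).const_mul 2) (by positivity)
  have h := (hasDerivAt_psi1 hs).mul hinv
  refine h.congr_deriv (Eq.symm ?_)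
  unfold chi'
  field_simp
  ring

lemma theta0_sq_eq {s : ℝ} (hs : 0 < s) : theta0 (s ^ 2) = psi s := by
  have h32 : ((s ^ 2 : ℝ)) ^ ((3 : ℝ) / 2) = s ^ 3 := by
    rw [← Real.rpow_natCast s 2, ← Real.rpow_mul hs.le, ← Real.rpow_natCast s 3]
    norm_num
  have hlog : Real.log (s ^ 2) = 2 * Real.log s := by
    rw [Real.log_pow]; push_cast; ring
  unfold theta0 psi psiA psiB
  rw [h32, hlog]
  ring

lemma theta0_eq_comp {x : ℝ} (hx : 0 < x) : theta0 x = psi (Real.sqrt x) := by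
  have := theta0_sq_eq (Real.sqrt_pos.2 hx)
  rwa [Real.sq_sqrt hx.le] at this

lemma hasDerivAt_theta0 {x : ℝ} (hx : 0 < x) :
    HasDerivAt theta0 (psi1 (Real.sqrt x) * (1 / (2 * Real.sqrt x))) x := by
  have hs : 0 < Real.sqrt x := Real.sqrt_pos.2 hx
  have hc : HasDerivAt (psi ∘ Real.sqrt) (psi1 (Real.sqrt x) * (1 / (2 * Real.sqrt x))) x :=
    (hasDerivAt_psi hs).comp x (Real.hasDerivAt_sqrt hx.ne')
  refine hc.congr_of_eventuallyEq ?_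
  filter_upwards [isOpen_Ioi.mem_nhds (Set.mem_Ioi.2 hx)] with y hy
  exact theta0_eq_comp hy

lemma deriv_theta0_eq {x : ℝ} (hx : 0 < x) :
    deriv theta0 x = psi1 (Real.sqrt x) * (1 / (2 * Real.sqrt x)) :=
  (hasDerivAt_theta0 hx).deriv

lemma hasDerivAt_d1 {x : ℝ} (hx : 0 < x) :
    HasDerivAt (fun y => psi1 (Real.sqrt y) * (1 / (2 * Real.sqrt y)))
      (chi' (Real.sqrt x) * (1 / (2 * Real.sqrt x))) x := by
  have hs : 0 < Real.sqrt x := Real.sqrt_pos.2 hx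
  have hc : HasDerivAt (chi ∘ Real.sqrt) (chi' (Real.sqrt x) * (1 / (2 * Real.sqrt x))) x :=
    (hasDerivAt_chi hs).comp x (Real.hasDerivAt_sqrt hx.ne')
  simpa [Function.comp_def, chi] using hc

lemma deriv2_theta0_eq {x : ℝ} (hx : 0 < x) :
    deriv (deriv theta0) x = chi' (Real.sqrt x) * (1 / (2 * Real.sqrt x)) := by
  have hE : deriv theta0 =ᶠ[nhds x]
      (fun y => psi1 (Real.sqrt y) * (1 / (2 * Real.sqrt y))) := by
    filter_upwards [isOpen_Ioi.mem_nhds (Set.mem_Ioi.2 hx)] with y hy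
    exact deriv_theta0_eq hy
  rw [hE.deriv_eq]
  exact (hasDerivAt_d1 hx).deriv

theorem theta0_zero_mode :
    ∀ R : ℝ, 0 < R →
      -(deriv (deriv theta0) R) + (15 / (4 * R ^ 2)) * theta0 R
        - (32 * R ^ 2 / (1 + R ^ 4) ^ 2) * theta0 R = 0 := by
  intro R hR
  obtain ⟨s, hs, rfl⟩ : ∃ s : ℝ, 0 < s ∧ s ^ 2 = R :=
    ⟨Real.sqrt R, Real.sqrt_pos.2 hR, Real.sq_sqrt hR.le⟩
  have hss : Real.sqrt (s ^ 2) = s := Real.sqrt_sq hs.le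
  rw [deriv2_theta0_eq hR, hss, theta0_sq_eq hs]
  have h1 : (1 : ℝ) + s ^ 8 ≠ 0 := by positivity
  have h2 : (1 : ℝ) + (s ^ 2) ^ 4 ≠ 0 := by positivity
  unfold chi' psi2 psi1 psi psiA psiA' psiA'' psiB psiB' psiB''
  field_simp
  ring
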